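/- Let n ≥ 2 be an integer, ε ∈ {−1, 1}, τ ∈ ℝ, and I ⊆ ℝ a nonempty open interval. Let h : I → ℝ be twice differentiable with h(t) > 0 for all t, and φ : I → ℝ be three times differentiable with φ(t) > 0 for all t, satisfying on I the two equations h'·φ' = h·φ'' and h'' + (n − 1)·h·φ''/φ + ε·τ·h/(n − 1) = 0. Then the function t ↦ φ(t)^{n−1}·φ''(t) + (ετ/(n(n − 1)))·φ(t)ⁿ is constant on I. -/

import Mathlib

/-- For an n-dimensional (n ≥ 2) locally conformally flat warped product solution of the
vacuum weighted Einstein field equations, given by the ODE system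
h'φ' = hφ'' and h'' + (n−1)hφ''/φ + ετh/(n−1) = 0 on a nonempty open interval I,
the quantity φ^{n−1}φ'' + (ετ/(n(n−1)))φⁿ is constant on I. -/
theorem first_integral_gamma
    (n : ℕ) (hn : 2 ≤ n) (ε τ : ℝ) (hε : ε = -1 ∨ ε = 1)
    (I : Set ℝ) (hIopen : IsOpen I) (hIne : I.Nonempty) (hIconn : I.OrdConnected)
    (h h' h'' φ φ' φ'' φ''' : ℝ → ℝ)
    (hhpos : ∀ t ∈ I, 0 < h t) (hφpos : ∀ t ∈ I, 0 < φ t)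
    (hdh : ∀ t ∈ I, HasDerivAt h (h' t) t)
    (hdh' : ∀ t ∈ I, HasDerivAt h' (h'' t) t)
    (hdφ : ∀ t ∈ I, HasDerivAt φ (φ' t) t)
    (hdφ' : ∀ t ∈ I, HasDerivAt φ' (φ'' t) t)
    (hdφ'' : ∀ t ∈ I, HasDerivAt φ'' (φ''' t) t)
    (heq1 : ∀ t ∈ I, h' t * φ' t = h t * φ'' t)
    (heq2 : ∀ t ∈ I,
      h'' t + ((n : ℝ) - 1) * h t * φ'' t / φ t + ε * τ * h t / ((n : ℝ) - 1) = 0) :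
    ∃ γ : ℝ, ∀ t ∈ I,
      φ t ^ (n - 1) * φ'' t + (ε * τ / ((n : ℝ) * ((n : ℝ) - 1))) * φ t ^ n = γ := by
  obtain ⟨m, rfl⟩ : ∃ m, n = m + 2 := ⟨n - 2, by omega⟩
  set c : ℝ := ε * τ / (((m + 2 : ℕ) : ℝ) * (((m + 2 : ℕ) : ℝ) - 1)) with hc
  set F : ℝ → ℝ := fun t => φ t ^ (m + 1) * φ'' t + c * φ t ^ (m + 2) with hF
  have key : ∀ t ∈ I, HasDerivAt F 0 t := by
    intro t ht
    have hφne : φ t ≠ 0 := (hφpos t ht).ne'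
    have hhne : h t ≠ 0 := (hhpos t ht).ne'
    have hm1 : ((m : ℝ) + 1) ≠ 0 := by positivity
    have e21 : ((m + 2 : ℕ) : ℝ) - 1 = (m : ℝ) + 1 := by push_cast; ring
    have hd3 : h t * φ''' t = h'' t * φ' t := by
      have e1 : HasDerivAt (fun s => h' s * φ' s) (h'' t * φ' t + h' t * φ'' t) t :=
        (hdh' t ht).mul (hdφ' t ht)
      have e2 : HasDerivAt (fun s => h s * φ'' s) (h' t * φ'' t + h t * φ''' t) t :=
        (hdh t ht).mul (hdφ'' t ht)
      have heqev : (fun s => h s * φ'' s) =ᶠ[nhds t] (fun s => h' s * φ' s) := by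
        filter_upwards [hIopen.mem_nhds ht] with s hs
        exact (heq1 s hs).symm
      have e1' : HasDerivAt (fun s => h s * φ'' s) (h'' t * φ' t + h' t * φ'' t) t :=
        e1.congr_of_eventuallyEq heqev
      have := e1'.unique e2
      linarith
    have hφ3 : φ''' t = h'' t * φ' t / h t := by
      field_simp
      linarith [hd3]
    have hh2 : h'' t = -(((m : ℝ) + 1) * h t * φ'' t / φ t + ε * τ * h t / ((m : ℝ) + 1)) := by
      have := heq2 t ht
      rw [e21] at this
      field_simp at this ⊢
      linear_combination this
    have H1 : HasDerivAt F
        ((((m : ℝ) + 1) * φ t ^ m * φ' t) * φ'' t + φ t ^ (m + 1) * φ''' t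
          + c * ((((m : ℝ) + 2) * φ t ^ (m + 1)) * φ' t)) t := by
      have p1 : HasDerivAt (fun s => φ s ^ (m + 1))
          ((((m + 1 : ℕ) : ℝ)) * φ t ^ m * φ' t) t := (hdφ t ht).pow (m + 1)
      have p2 : HasDerivAt (fun s => φ s ^ (m + 2))
          ((((m + 2 : ℕ) : ℝ)) * φ t ^ (m + 1) * φ' t) t := (hdφ t ht).pow (m + 2)
      have q1 := p1.mul (hdφ'' t ht)
      have q2 := p2.const_mul c
      have := q1.add q2
      refine this.congr_deriv ?_
      push_cast
      ring
    have hm2 : ((m : ℝ) + 2) ≠ 0 := by positivity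
    convert H1 using 1
    rw [hφ3, hh2, hc, e21]
    push_cast
    field_simp
    ring
  obtain ⟨t₀, ht₀⟩ := hIne
  refine ⟨F t₀, fun t ht => ?_⟩
  have hconv : Convex ℝ I := hIconn.convex
  have hdiff : DifferentiableOn ℝ F I := fun x hx =>
    ((key x hx).differentiableAt).differentiableWithinAt
  have hfd : ∀ x ∈ I, fderivWithin ℝ F I x = 0 := by
    intro x hx
    have := ((key x hx).hasFDerivAt).hasFDerivWithinAt.fderivWithin
      (hIopen.uniqueDiffWithinAt hx)
    rw [this]
    ext
    simp
  exact hconv.is_const_of_fderivWithin_eq_zero hdiff hfd ht ht₀
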